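/- Let G = D(n,l) be the Dandelion graph with n > l ≥ 2. If n - l + 1 < ⌈n/2⌉ (equivalently Δ(G) < ⌈(|E(G)|+1)/2⌉), then ⌈n/2⌉ ≤ es(G) ≤ n - l + ⌈l/2⌉. -/

import Mathlib

/-- A vertex `k`-labeling `φ : V → {1,…,k}` of `G` is *edge irregular* if the
weights `φ x + φ y` of distinct edges are distinct. -/
def IsEdgeIrregular {V : Type*} (G : SimpleGraph V) (k : ℕ) (φ : V → ℕ) : Prop :=
  (∀ v, 1 ≤ φ v ∧ φ v ≤ k) ∧
  ∀ u v x y, G.Adj u v → G.Adj x y → s(u, v) ≠ s(x, y) → φ u + φ v ≠ φ x + φ y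

/-- The edge irregularity strength `es G`. -/
noncomputable def es {V : Type*} (G : SimpleGraph V) : ℕ :=
  sInf {k | ∃ φ : V → ℕ, IsEdgeIrregular G k φ}

/-- The Dandelion graph `D(n,l)` on `Fin n`: path vertices `p_j` are `0,…,l-1`,
leaves `x_1,…,x_{n-l}` are `l,…,n-1`, each leaf adjacent to the center `0`. -/
def Dandelion (n l : ℕ) : SimpleGraph (Fin n) :=
  SimpleGraph.fromRel (fun a b =>
    (a.val = 0 ∧ l ≤ b.val) ∨ (a.val + 1 = b.val ∧ b.val ≤ l - 1))

instance (n l : ℕ) : DecidableRel (Dandelion n l).Adj := fun a b =>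
  decidable_of_iff _ (SimpleGraph.fromRel_adj _ a b).symm

lemma dandelion_adj_iff (n l : ℕ) (a b : Fin n) :
    (Dandelion n l).Adj a b ↔ a ≠ b ∧
      (((a.val = 0 ∧ l ≤ b.val) ∨ (a.val + 1 = b.val ∧ b.val ≤ l - 1)) ∨
       ((b.val = 0 ∧ l ≤ a.val) ∨ (b.val + 1 = a.val ∧ a.val ≤ l - 1))) :=
  SimpleGraph.fromRel_adj _ a b

/-- Classification of edges of the Dandelion graph. -/
lemma dandelion_classify {n l : ℕ} (hl : 2 ≤ l) {u v : Fin n}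
    (h : (Dandelion n l).Adj u v) :
    ∃ a b : Fin n, s(u, v) = s(a, b) ∧ a.val < b.val ∧
      ((a.val = 0 ∧ l ≤ b.val) ∨ (a.val + 1 = b.val ∧ b.val ≤ l - 1)) := by
  rw [dandelion_adj_iff] at h
  obtain ⟨hne, h | h⟩ := h
  · exact ⟨u, v, rfl, by omega, h⟩
  · exact ⟨v, u, Sym2.eq_swap, by omega, h⟩

/-- The explicit labeling achieving the upper bound. -/
def dandelionLabel (n l : ℕ) (v : Fin n) : ℕ :=
  if l ≤ v.val then v.val - l + 1
  else if v.val % 2 = 0 then v.val / 2 + 1 else n - l + 1 + v.val / 2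

lemma dandelion_weight {n l : ℕ} (hl : 2 ≤ l) (hn : l < n) {a b : Fin n}
    (hab : a.val < b.val)
    (h : (a.val = 0 ∧ l ≤ b.val) ∨ (a.val + 1 = b.val ∧ b.val ≤ l - 1)) :
    dandelionLabel n l a + dandelionLabel n l b =
      if l ≤ b.val then b.val - l + 2 else n - l + 2 + a.val := by
  have hbn := b.isLt
  unfold dandelionLabel
  split_ifs <;> omega

lemma dandelion_upper {n l : ℕ} (hl : 2 ≤ l) (hn : l < n) :
    IsEdgeIrregular (Dandelion n l) (n - l + (l + 1) / 2) (dandelionLabel n l) := by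
  constructor
  · intro v
    have := v.isLt
    unfold dandelionLabel
    split_ifs <;> omega
  · intro u v x y huv hxy hne heq
    obtain ⟨a, b, hs1, hab, h1⟩ := dandelion_classify hl huv
    obtain ⟨c, d, hs2, hcd, h2⟩ := dandelion_classify hl hxy
    have e1 : dandelionLabel n l u + dandelionLabel n l v =
        dandelionLabel n l a + dandelionLabel n l b := by
      rcases Sym2.eq_iff.mp hs1 with ⟨h, h'⟩ | ⟨h, h'⟩ <;> rw [h, h'] <;> ring
    have e2 : dandelionLabel n l x + dandelionLabel n l y =
        dandelionLabel n l c + dandelionLabel n l d := by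
      rcases Sym2.eq_iff.mp hs2 with ⟨h, h'⟩ | ⟨h, h'⟩ <;> rw [h, h'] <;> ring
    have w1 := dandelion_weight hl hn hab h1
    have w2 := dandelion_weight hl hn hcd h2
    have hne' : s(a, b) ≠ s(c, d) := by rw [← hs1, ← hs2]; exact hne
    have hbn := b.isLt
    have hdn := d.isLt
    -- show a = c and b = d, contradiction
    apply hne'
    have hac : a.val = c.val ∧ b.val = d.val := by
      rw [e1, e2, w1, w2] at heq
      split_ifs at heq <;> omega
    rw [Sym2.eq_iff]
    left
    exact ⟨Fin.ext hac.1, Fin.ext hac.2⟩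

lemma dandelion_lower {n l k : ℕ} (hl : 2 ≤ l) (hn : l < n) (φ : Fin n → ℕ)
    (hφ : IsEdgeIrregular (Dandelion n l) k φ) : (n + 1) / 2 ≤ k := by
  have hn0 : 0 < n := by omega
  set vtx : ℕ → Fin n := fun i => ⟨i % n, Nat.mod_lt _ hn0⟩ with hvtx
  have hval : ∀ i, i < n → (vtx i).val = i := fun i hi => Nat.mod_eq_of_lt hi
  set F : ℕ → ℕ := fun i =>
    if l ≤ i then φ (vtx 0) + φ (vtx i) else φ (vtx (i - 1)) + φ (vtx i) with hF
  -- the edge used for index i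
  have hadj : ∀ i, 1 ≤ i → i ≤ n - 1 →
      (Dandelion n l).Adj (if l ≤ i then vtx 0 else vtx (i - 1)) (vtx i) := by
    intro i h1 h2
    have hvi := hval i (by omega)
    rw [dandelion_adj_iff]
    split_ifs with hli
    · have hv0 := hval 0 (by omega)
      refine ⟨?_, Or.inl (Or.inl ⟨hv0, by omega⟩)⟩
      intro hcontra
      have := congrArg Fin.val hcontra
      omega
    · have hvi1 := hval (i - 1) (by omega)
      refine ⟨?_, Or.inl (Or.inr ⟨by omega, by omega⟩)⟩
      intro hcontra
      have := congrArg Fin.val hcontra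
      omega
  have hinj : Set.InjOn F (Finset.Icc 1 (n - 1)) := by
    intro i hi j hj hFij
    simp only [Finset.coe_Icc, Set.mem_Icc] at hi hj
    by_contra hij
    have hvi := hval i (by omega)
    have hvj := hval j (by omega)
    refine hφ.2 _ (vtx i) _ (vtx j) (hadj i hi.1 hi.2) (hadj j hj.1 hj.2) ?_ ?_
    · -- the two edges are distinct
      intro hsym
      rw [Sym2.eq_iff] at hsym
      have hv0 := hval 0 (by omega)
      have hvi1 := hval (i - 1) (by omega)
      have hvj1 := hval (j - 1) (by omega)
      rcases hsym with ⟨ha, hb⟩ | ⟨ha, hb⟩ <;>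
      · have hb' := congrArg Fin.val hb
        have ha' := congrArg Fin.val ha
        split_ifs at ha' hb' <;> simp only [hvi, hvj, hv0, hvi1, hvj1] at ha' hb' <;> omega
    · -- the weights are equal
      have : ∀ m, (if l ≤ m then φ (vtx 0) + φ (vtx m) else φ (vtx (m - 1)) + φ (vtx m))
          = F m := fun m => rfl
      rw [hF] at hFij
      simp only at hFij
      split_ifs at hFij ⊢ <;> omega
  have hmaps : ∀ i ∈ Finset.Icc 1 (n - 1), F i ∈ Finset.Icc 2 (2 * k) := by
    intro i hi
    simp only [Finset.mem_Icc] at hi ⊢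
    have b1 := hφ.1 (vtx 0)
    have b2 := hφ.1 (vtx i)
    have b3 := hφ.1 (vtx (i - 1))
    rw [hF]
    simp only
    split_ifs <;> omega
  have hcard := Finset.card_le_card_of_injOn F hmaps hinj
  rw [Nat.card_Icc, Nat.card_Icc] at hcard
  omega

/-- If `n-l+1 < ⌈n/2⌉`, then `⌈n/2⌉ ≤ es(D(n,l)) ≤ n - l + ⌈l/2⌉`. -/
theorem stmt_6 (n l : ℕ) (hl : 2 ≤ l) (hn : l < n) (h : n - l + 1 < (n + 1) / 2) :
    (n + 1) / 2 ≤ es (Dandelion n l) ∧ es (Dandelion n l) ≤ n - l + (l + 1) / 2 := by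
  have hmem : (n - l + (l + 1) / 2) ∈ {k | ∃ φ : Fin n → ℕ, IsEdgeIrregular (Dandelion n l) k φ} :=
    ⟨dandelionLabel n l, dandelion_upper hl hn⟩
  constructor
  · exact le_csInf ⟨_, hmem⟩ (fun k ⟨φ, hφ⟩ => dandelion_lower hl hn φ hφ)
  · exact Nat.sInf_le hmem
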